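/- Let K ⊂ ℝⁿ be a compact convex o-symmetric body with nonempty interior, Λ a full-rank lattice, and Λ' ⊆ Λ a sublattice of rank r ≤ n−1 with λ₁(K,Λ') ≥ λ₁(K,Λ) = 1. Then for every γ ≥ 1, the number of nonzero points of Λ' in γK is strictly less than γ^{n−1} · 3^{n−1} / λ₁(K,Λ'). -/

import Mathlib

open MeasureTheory Set Pointwise

/-- The lattice generated by the vectors `b`. -/
noncomputable def lat {n : ℕ} (b : Fin n → (Fin n → ℝ)) : Set (Fin n → ℝ) :=
  (Submodule.span ℤ (Set.range b) : Submodule ℤ (Fin n → ℝ))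

/-- The determinant (covolume) of the lattice with basis `b`. -/
noncomputable def latDet {n : ℕ} (b : Fin n → (Fin n → ℝ)) : ℝ :=
  |(Matrix.of b).det|

/-- A compact convex `o`-symmetric body with nonempty interior. -/
def IsBody {n : ℕ} (K : Set (Fin n → ℝ)) : Prop :=
  IsCompact K ∧ Convex ℝ K ∧ K = -K ∧ (interior K).Nonempty

/-- First successive minimum of `K` w.r.t. the point set `S`. -/
noncomputable def lambda1 {n : ℕ} (K S : Set (Fin n → ℝ)) : ℝ :=
  sInf {l : ℝ | 0 ≤ l ∧ ∃ x ∈ S, x ≠ 0 ∧ x ∈ l • K}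

/-- First restricted successive minimum: smallest `l ≥ 0` with `l • K ∩ S ≠ ∅`. -/
noncomputable def lambdaRes {n : ℕ} (K S : Set (Fin n → ℝ)) : ℝ :=
  sInf {l : ℝ | 0 ≤ l ∧ (l • K ∩ S).Nonempty}

/-- `i`-th successive minimum of `K` w.r.t. the point set `S`. -/
noncomputable def lambdaI {n : ℕ} (i : ℕ) (K S : Set (Fin n → ℝ)) : ℝ :=
  sInf {l : ℝ | 0 ≤ l ∧ i ≤ Module.finrank ℝ (Submodule.span ℝ (l • K ∩ S))}

/-- The (half-open) fundamental parallelepiped of the basis `b`. -/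
noncomputable def fundPar {n : ℕ} (b : Fin n → (Fin n → ℝ)) : Set (Fin n → ℝ) :=
  {x | ∃ ρ : Fin n → ℝ, (∀ i, 0 ≤ ρ i ∧ ρ i < 1) ∧ x = ∑ i, ρ i • b i}

/-- The covering radius of `K` with respect to the point set `L`. -/
noncomputable def covRadius {n : ℕ} (K L : Set (Fin n → ℝ)) : ℝ :=
  sInf {μ : ℝ | 0 < μ ∧ ∀ t : Fin n → ℝ, (({t} + μ • K) ∩ L).Nonempty}

open Submodule Module in
lemma finrank_eq_of_discrete' {E : Type*} [NormedAddCommGroup E] [NormedSpace ℝ E]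
    [FiniteDimensional ℝ E] (M : Submodule ℤ E) [DiscreteTopology M] :
    finrank ℤ M = finrank ℝ (span ℝ (M : Set E)) := by
  let f := (span ℝ (M : Set E)).subtype
  let L₀ := M.comap (f.restrictScalars ℤ)
  have h_img : f '' L₀ = M := by
    rw [← LinearMap.coe_restrictScalars ℤ f, ← Submodule.map_coe (f.restrictScalars ℤ),
      Submodule.map_comap_eq_self]
    exact fun x hx ↦ LinearMap.mem_range.mpr ⟨⟨x, Submodule.subset_span hx⟩, rfl⟩
  have hd : DiscreteTopology L₀ := by
    refine DiscreteTopology.preimage_of_continuous_injective (M : Set E) ?_ (injective_subtype _)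
    exact LinearMap.continuous_of_finiteDimensional f
  have hz : IsZLattice ℝ L₀ := ⟨by
    rw [← (Submodule.map_injective_of_injective (injective_subtype _)).eq_iff, Submodule.map_span,
      Submodule.map_top, range_subtype, h_img]⟩
  rw [← ZLattice.rank ℝ L₀]
  have hmap : L₀.map (f.restrictScalars ℤ) = M := SetLike.ext'_iff.mpr h_img
  exact (LinearEquiv.finrank_eq
    ((Submodule.equivMapOfInjective (f.restrictScalars ℤ)
      (by exact injective_subtype _) L₀) ≪≫ₗ LinearEquiv.ofEq _ _ hmap)).symm


/-- counting nonzero points of a lower-rank sublattice in `γK`. -/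
theorem stmt16 {n : ℕ} (K : Set (Fin n → ℝ)) (hK : IsBody K)
    (b : Fin n → (Fin n → ℝ)) (hb : LinearIndependent ℝ b)
    (L' : AddSubgroup (Fin n → ℝ)) (hsub : (L' : Set (Fin n → ℝ)) ⊆ lat b)
    (hrk : Module.finrank ℝ (Submodule.span ℝ (L' : Set (Fin n → ℝ))) ≤ n - 1)
    (h1 : lambda1 K (lat b) = 1) (h1' : 1 ≤ lambda1 K (L' : Set (Fin n → ℝ)))
    (γ : ℝ) (hγ : 1 ≤ γ) :
    (((γ • K ∩ (L' : Set (Fin n → ℝ))) \ {0}).ncard : ℝ) <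
      γ ^ (n - 1) * 3 ^ (n - 1) / lambda1 K (L' : Set (Fin n → ℝ)) := by
  classical
  obtain ⟨hKc, hKconv, hKsymm, hKint⟩ := hK
  set lam := lambda1 K (L' : Set (Fin n → ℝ)) with hlamdef
  have hlampos : (0:ℝ) < lam := lt_of_lt_of_le one_pos h1'
  have hγpos : (0:ℝ) < γ := lt_of_lt_of_le one_pos hγ
  have hRpos : 0 < γ ^ (n-1) * 3 ^ (n-1) / lam := by positivity
  have hle : ∀ l : ℝ, 0 ≤ l →
      (∃ x ∈ (L' : Set (Fin n → ℝ)), x ≠ 0 ∧ x ∈ l • K) → lam ≤ l := fun l hl hw =>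
    csInf_le ⟨0, fun t ht => ht.1⟩ ⟨hl, hw⟩
  set S := (γ • K ∩ (L' : Set (Fin n → ℝ))) \ {0} with hSdef
  by_cases hS0 : S.ncard = 0
  · rw [hS0]; exact_mod_cast hRpos
  have hSne : S.Nonempty := Set.nonempty_of_ncard_ne_zero hS0
  obtain ⟨x₀, ⟨⟨hx₀K, hx₀L⟩, hx₀0⟩⟩ := hSne
  have hx₀0' : x₀ ≠ 0 := by simpa using hx₀0
  have hlamγ : lam ≤ γ := hle γ (le_of_lt hγpos) ⟨x₀, hx₀L, hx₀0', hx₀K⟩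
  -- 0 ∈ K
  obtain ⟨w, hw⟩ := hKint
  have hwK : w ∈ K := interior_subset hw
  have hnegK : ∀ u ∈ K, -u ∈ K := by
    intro u hu
    rw [hKsymm]
    exact Set.neg_mem_neg.mpr hu
  have h0K : (0 : Fin n → ℝ) ∈ K := by
    have := hKconv hwK (hnegK w hwK) (by norm_num : (0:ℝ) ≤ 1/2) (by norm_num : (0:ℝ) ≤ 1/2)
      (by norm_num)
    simpa using this
  -- lattice setup
  have hn0 : n ≠ 0 := by
    rintro rfl
    exact hx₀0' (Subsingleton.elim _ _)
  haveI : Nonempty (Fin n) := ⟨⟨0, Nat.pos_of_ne_zero hn0⟩⟩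
  have hn : Fintype.card (Fin n) = Module.finrank ℝ (Fin n → ℝ) := by
    simp [Module.finrank_fin_fun]
  let B : Module.Basis (Fin n) ℝ (Fin n → ℝ) := basisOfLinearIndependentOfCardEqFinrank hb hn
  have hBb : Set.range B = Set.range b := by
    rw [coe_basisOfLinearIndependentOfCardEqFinrank]
  set M : Submodule ℤ (Fin n → ℝ) := AddSubgroup.toIntSubmodule L' with hMdef
  have hMsub : (M : Set (Fin n → ℝ)) ⊆
      ((Submodule.span ℤ (Set.range B) : Submodule ℤ (Fin n → ℝ)) : Set (Fin n → ℝ)) := by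
    rw [hBb]; exact hsub
  haveI hMd : DiscreteTopology M :=
    DiscreteTopology.of_subset
      (inferInstance : DiscreteTopology (Submodule.span ℤ (Set.range B))) hMsub
  haveI : Module.Finite ℤ M := inferInstance
  haveI : Module.Free ℤ M := inferInstance
  set s := Module.finrank ℤ M with hsdef
  have hsrank : s = Module.finrank ℝ (Submodule.span ℝ (L' : Set (Fin n → ℝ))) :=
    finrank_eq_of_discrete' M
  have hs_le : s ≤ n - 1 := by rw [hsrank]; exact hrk
  have hs_pos : 1 ≤ s := by
    rw [hsrank]
    have hx₀V : x₀ ∈ Submodule.span ℝ (L' : Set (Fin n → ℝ)) := Submodule.subset_span hx₀L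
    haveI : Nontrivial (Submodule.span ℝ (L' : Set (Fin n → ℝ))) :=
      ⟨⟨x₀, hx₀V⟩, 0, by simp [Subtype.ext_iff, hx₀0']⟩
    exact Module.finrank_pos
  let v : Module.Basis (Fin s) ℤ M := Module.finBasis ℤ M
  set m : ℕ := ⌊2 * γ / lam⌋₊ + 1 with hmdef
  haveI : NeZero m := ⟨Nat.succ_ne_zero _⟩
  have hmpos : (0:ℝ) < m := by positivity
  have hmlt : 2 * γ / lam < m := by
    rw [hmdef]; push_cast
    exact Nat.lt_floor_add_one _
  have hmle : (m:ℝ) ≤ 2 * γ / lam + 1 := by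
    rw [hmdef]; push_cast
    have := Nat.floor_le (show (0:ℝ) ≤ 2 * γ / lam by positivity)
    linarith
  clear_value m
  let F : (Fin n → ℝ) → (Fin s → ZMod m) := fun x =>
    if h : x ∈ M then (fun i => ((v.repr ⟨x, h⟩ i : ℤ) : ZMod m)) else 0
  set T := γ • K ∩ (L' : Set (Fin n → ℝ)) with hTdef
  have h0T : (0 : Fin n → ℝ) ∈ T := ⟨⟨0, h0K, smul_zero γ⟩, L'.zero_mem⟩
  have hinj : Set.InjOn F T := by
    intro x hx y hy hF
    by_contra hne
    have hxM : x ∈ M := hx.2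
    have hyM : y ∈ M := hy.2
    simp only [F, dif_pos hxM, dif_pos hyM] at hF
    have hdvd : ∀ i, (m:ℤ) ∣ (v.repr ⟨x, hxM⟩ i - v.repr ⟨y, hyM⟩ i) := by
      intro i
      have h := congrFun hF i
      rw [ZMod.intCast_eq_intCast_iff] at h
      exact dvd_sub_comm.mp h.dvd
    set z : M := ∑ i, ((v.repr ⟨x, hxM⟩ i - v.repr ⟨y, hyM⟩ i) / (m:ℤ)) • v i with hzdef
    have hmz : (m:ℤ) • z = (⟨x, hxM⟩ : M) - ⟨y, hyM⟩ := by
      rw [hzdef, Finset.smul_sum]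
      have heach : ∀ i ∈ Finset.univ,
          (m:ℤ) • (((v.repr ⟨x, hxM⟩ i - v.repr ⟨y, hyM⟩ i) / (m:ℤ)) • v i)
            = (v.repr ⟨x, hxM⟩ i) • v i - (v.repr ⟨y, hyM⟩ i) • v i := by
        intro i _
        rw [smul_smul, Int.mul_ediv_cancel' (hdvd i), sub_smul]
      rw [Finset.sum_congr rfl heach, Finset.sum_sub_distrib, v.sum_repr, v.sum_repr]
    have hz0 : z ≠ 0 := by
      intro h
      rw [h, smul_zero] at hmz
      have : (⟨x, hxM⟩ : M) = ⟨y, hyM⟩ := by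
        have := hmz.symm
        rwa [sub_eq_zero] at this
      exact hne (congrArg Subtype.val this)
    have hzL : (z : Fin n → ℝ) ∈ (L' : Set (Fin n → ℝ)) := z.2
    have hzne : (z : Fin n → ℝ) ≠ 0 := fun h => hz0 (Subtype.ext h)
    have hxyK : x - y ∈ (2 * γ) • K := by
      have hyK' : -y ∈ γ • K := by
        have hKsmul : -(γ • K) = γ • K := by
          nth_rewrite 2 [hKsymm]
          rw [Set.smul_set_neg]
        exact hKsmul ▸ Set.neg_mem_neg.mpr hy.1
      have hsplit : (2 * γ) • K = γ • K + γ • K := by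
        rw [show (2:ℝ) * γ = γ + γ by ring]
        exact hKconv.add_smul (le_of_lt hγpos) (le_of_lt hγpos)
      rw [hsplit, sub_eq_add_neg]
      exact Set.add_mem_add hx.1 hyK'
    have hcoe : (m:ℝ) • (z : Fin n → ℝ) = x - y := by
      have h := congrArg (Subtype.val : M → (Fin n → ℝ)) hmz
      rw [AddSubgroupClass.coe_sub] at h
      have h2 : ((((m:ℤ) • z : M)) : Fin n → ℝ) = (m:ℤ) • (z : Fin n → ℝ) := rfl
      rw [h2, show ((m:ℤ) • (z : Fin n → ℝ)) = ((m:ℤ) : ℝ) • (z : Fin n → ℝ) from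
        (Int.cast_smul_eq_zsmul ..).symm] at h
      rw [Int.cast_natCast] at h
      exact h
    have hzK : (z : Fin n → ℝ) ∈ (2 * γ / m) • K := by
      obtain ⟨k, hk, hkeq⟩ := hxyK
      refine ⟨k, hk, ?_⟩
      show (2 * γ / (m:ℝ)) • k = (z : Fin n → ℝ)
      have hz' : (z : Fin n → ℝ) = (m:ℝ)⁻¹ • (x - y) := by
        rw [← hcoe, smul_smul, inv_mul_cancel₀ (ne_of_gt hmpos), one_smul]
      have hk2 : (2 * γ) • k = x - y := hkeq
      rw [hz', ← hk2, smul_smul]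
      congr 1
      field_simp
    have hlamle : lam ≤ 2 * γ / m :=
      hle (2 * γ / m) (by positivity) ⟨(z : Fin n → ℝ), hzL, hzne, hzK⟩
    have : 2 * γ / m < lam := by
      rw [div_lt_iff₀ hmpos]
      rw [div_lt_iff₀ hlampos] at hmlt
      linarith
    linarith
  have hcard : T.ncard ≤ m ^ s := by
    have h := Set.ncard_le_ncard_of_injOn F (fun a _ => Set.mem_univ (F a)) hinj Set.finite_univ
    simpa [Set.ncard_univ, Nat.card_eq_fintype_card, Fintype.card_fun, ZMod.card] using h
  have hTfin : T.Finite := Set.Finite.of_finite_image (Set.toFinite _) hinj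
  have hT1 : 1 ≤ T.ncard := (Set.ncard_pos hTfin).mpr ⟨0, h0T⟩
  have hScard : S.ncard + 1 ≤ m ^ s := by
    have hSeq : S.ncard = T.ncard - 1 := Set.ncard_diff_singleton_of_mem h0T
    omega
  -- real arithmetic
  have h1gl : 1 ≤ γ / lam := (one_le_div hlampos).mpr hlamγ
  have h3 : (m:ℝ) ≤ 3 * γ / lam := by
    have h2 : 2 * γ / lam + 1 ≤ 2 * γ / lam + γ / lam := by linarith
    calc (m:ℝ) ≤ 2 * γ / lam + γ / lam := by linarith
      _ = 3 * γ / lam := by ring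
  have hbase1 : (1:ℝ) ≤ 3 * γ / lam := by
    calc (1:ℝ) ≤ γ / lam := h1gl
      _ ≤ 3 * γ / lam := by rw [div_le_div_iff₀ hlampos hlampos]; nlinarith
  have hfinal : ((m:ℝ)) ^ s ≤ (3 * γ / lam) ^ (n-1) :=
    le_trans (pow_le_pow_left₀ (le_of_lt hmpos) h3 s) (pow_le_pow_right₀ hbase1 hs_le)
  have hlamp : lam ≤ lam ^ (n-1) := le_self_pow₀ h1' (by omega)
  have hcast : (S.ncard : ℝ) ≤ (m:ℝ) ^ s - 1 := by
    have := hScard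
    have : ((S.ncard + 1 : ℕ) : ℝ) ≤ ((m ^ s : ℕ) : ℝ) := by exact_mod_cast this
    push_cast at this
    linarith
  calc (S.ncard : ℝ) ≤ (m:ℝ) ^ s - 1 := hcast
    _ < (3 * γ / lam) ^ (n-1) := by linarith
    _ = 3 ^ (n-1) * γ ^ (n-1) / lam ^ (n-1) := by rw [div_pow, mul_pow]
    _ ≤ γ ^ (n-1) * 3 ^ (n-1) / lam := by
        rw [mul_comm (3 ^ (n-1) : ℝ)]
        apply div_le_div_of_nonneg_left (by positivity) hlampos hlamp
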